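/- Let n, t ≥ 0 and p ≥ 1 be integers, let S ⊆ [n] with |S| = k, and let 𝐛 ∈ (ℤ/pℤ)^n satisfy ∅ ≠ supp(𝐛) ⊆ S. In the real inner product space of functions [n]^t × (ℤ/pℤ)^t → ℝ, define φ_{S,𝐛} as the 0/1 indicator vector of {(𝐢,𝐱) : 𝐢 ∈ S^t, ms(𝐢,𝐱) = 𝐛} and φ_𝐛 as the 0/1 indicator vector of {(𝐢,𝐱) : 𝐢 ∈ supp(𝐛)^t, ms(𝐢,𝐱) = 𝐛}. If φ_{S,𝐛} ≠ 0, then φ_𝐛 ≠ 0 and the squared normalized overlap satisfies ⟨φ_𝐛, φ_{S,𝐛}⟩² / (‖φ_𝐛‖² · ‖φ_{S,𝐛}‖²) ≥ p/(p + k^t); in particular, 1 − ⟨φ_𝐛, φ_{S,𝐛}⟩² / (‖φ_𝐛‖² · ‖φ_{S,𝐛}‖²) ≤ k^t/p. -/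

import Mathlib

open scoped RealInnerProductSpace

/-- The modular signature of a pair of sequences `i ∈ [n]^t`, `x ∈ (ℤ/pℤ)^t`:
its `q`-th coordinate is `∑_{r : i r = q} x r (mod p)`. -/
def ms {n t p : ℕ} (i : Fin t → Fin n) (x : Fin t → ZMod p) : Fin n → ZMod p :=
  fun q => ∑ r ∈ Finset.univ.filter (fun r => i r = q), x r

/-- The support of `b ∈ (ℤ/pℤ)^n`: the set of coordinates with nonzero entry. -/
def msupp {n p : ℕ} (b : Fin n → ZMod p) : Finset (Fin n) :=
  Finset.univ.filter (fun q => b q ≠ 0)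

/-- The (unnormalised) real vector `φ_{S,𝐛}`: the 0/1 indicator of
`{(𝐢,𝐱) : 𝐢 ∈ S^t, ms(𝐢,𝐱) = 𝐛}` in the Euclidean space indexed by
`[n]^t × (ℤ/pℤ)^t`. -/
noncomputable def phi (n t p : ℕ) [NeZero p] (S : Finset (Fin n)) (b : Fin n → ZMod p) :
    EuclideanSpace ℝ ((Fin t → Fin n) × (Fin t → ZMod p)) :=
  WithLp.toLp 2 (fun ix : (Fin t → Fin n) × (Fin t → ZMod p) =>
    if (∀ r, ix.1 r ∈ S) ∧ ms ix.1 ix.2 = b then 1 else 0)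


open Finset

section aux
variable {n t p : ℕ} [NeZero p]

lemma msupp_subset_range {i : Fin t → Fin n} {x : Fin t → ZMod p} {b : Fin n → ZMod p}
    (h : ms i x = b) : msupp b ⊆ Finset.image i Finset.univ := by
  intro q hq
  simp only [msupp, mem_filter, mem_univ, true_and] at hq
  by_contra hc
  apply hq
  rw [← h]
  have he : Finset.univ.filter (fun r => i r = q) = ∅ := by
    rw [Finset.filter_eq_empty_iff]
    intro r _ hr
    exact hc (mem_image.mpr ⟨r, mem_univ r, hr⟩)
  simp only [ms, he, Finset.sum_empty]

lemma fiber_card (ht : 0 < t) (i : Fin t → Fin n) (b : Fin n → ZMod p)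
    (hb : msupp b ⊆ Finset.image i Finset.univ) :
    (Finset.univ.filter fun x : Fin t → ZMod p => ms i x = b).card
      = p ^ (t - (Finset.image i Finset.univ).card) := by
  classical
  haveI : Nonempty (Fin t) := ⟨⟨0, ht⟩⟩
  set T := Finset.image i Finset.univ with hT
  set g : Fin n → Fin t := fun q => if h : ∃ r, i r = q then h.choose else Classical.arbitrary _
    with hgdef
  have hg : ∀ q ∈ T, i (g q) = q := by
    intro q hq
    obtain ⟨r, -, hr⟩ := mem_image.mp hq
    have h : ∃ r, i r = q := ⟨r, hr⟩
    simp only [hgdef, dif_pos h]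
    exact h.choose_spec
  set R := Finset.univ.filter (fun r : Fin t => g (i r) = r) with hRdef
  have hmemR : ∀ r, r ∈ R ↔ g (i r) = r := by
    intro r; simp [hRdef]
  have huniq : ∀ r r', r ∈ R → r' ∈ R → i r = i r' → r = r' := by
    intro r r' hr hr' he
    rw [← (hmemR r).mp hr, ← (hmemR r').mp hr', he]
  have hgR : ∀ q ∈ T, g q ∈ R := by
    intro q hq
    rw [hmemR]
    congr 1
    exact hg q hq
  have hcardR : R.card = T.card := by
    apply Finset.card_bij (fun r _ => i r)
    · intro r _; exact mem_image_of_mem i (mem_univ r)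
    · intro r hr r' hr' he; exact huniq r r' hr hr' he
    · intro q hq; exact ⟨g q, hgR q hq, hg q hq⟩
  set Y := Fintype.piFinset
      (fun r : Fin t => if r ∈ R then ({0} : Finset (ZMod p)) else Finset.univ) with hY
  have hYcard : Y.card = p ^ (t - T.card) := by
    rw [hY, Fintype.card_piFinset]
    have h1 : ∀ r : Fin t,
        (if r ∈ R then ({0} : Finset (ZMod p)) else Finset.univ).card
          = if r ∈ R then 1 else p := by
      intro r; split <;> simp [ZMod.card]
    rw [Finset.prod_congr rfl (fun r _ => h1 r), Finset.prod_ite]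
    have h2 : Finset.univ.filter (fun r : Fin t => r ∈ R) = R := by
      ext r; simp
    have h3 : (Finset.univ.filter (fun r : Fin t => ¬ r ∈ R)).card = t - T.card := by
      have := Finset.card_filter_add_card_filter_not
        (s := (Finset.univ : Finset (Fin t))) (p := fun r => r ∈ R)
      rw [h2] at this
      simp only [Finset.card_univ, Fintype.card_fin] at this
      omega
    simp [h3]
  rw [← hYcard]
  set F : Fin n → Finset (Fin t) := fun q => Finset.univ.filter (fun r => i r = q) with hF
  have hmemF : ∀ q r, r ∈ F q ↔ i r = q := by intro q r; simp [hF]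
  -- forward and backward maps
  apply Finset.card_nbij' (fun x r => if r ∈ R then 0 else x r)
    (fun y r => if r ∈ R then b (i r) - ∑ r' ∈ (F (i r)).erase r, y r' else y r)
  · -- forward maps into Y
    intro x _
    rw [hY, Finset.mem_coe, Fintype.mem_piFinset]
    intro r
    by_cases hr : r ∈ R <;> simp [hr]
  · -- backward maps into fiber
    intro y hy
    simp only [Finset.mem_coe, mem_filter, mem_univ, true_and]
    funext q
    show ∑ r ∈ F q, _ = b q
    by_cases hq : q ∈ T
    · have hgq : g q ∈ F q := (hmemF q (g q)).mpr (hg q hq)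
      rw [← Finset.add_sum_erase _ _ hgq]
      have h1 : (if g q ∈ R then b (i (g q)) - ∑ r' ∈ (F (i (g q))).erase (g q), y r'
            else y (g q)) = b q - ∑ r' ∈ (F q).erase (g q), y r' := by
        rw [if_pos (hgR q hq), hg q hq]
      rw [h1]
      have h2 : ∀ r ∈ (F q).erase (g q),
          (if r ∈ R then b (i r) - ∑ r' ∈ (F (i r)).erase r, y r' else y r) = y r := by
        intro r hr
        have hrF : r ∈ F q := mem_of_mem_erase hr
        have hrne : r ≠ g q := ne_of_mem_erase hr
        have hrR : r ∉ R := fun h =>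
          hrne (huniq r (g q) h (hgR q hq) (by rw [(hmemF q r).mp hrF, hg q hq]))
        rw [if_neg hrR]
      rw [Finset.sum_congr rfl h2]
      ring
    · have hFe : F q = ∅ := by
        rw [Finset.filter_eq_empty_iff]
        intro r _ hr
        exact hq (mem_image.mpr ⟨r, mem_univ r, hr⟩)
      have hbq : b q = 0 := by
        by_contra h
        exact hq (hb (by simp [msupp, h]))
      rw [hFe, hbq, Finset.sum_empty]
  · -- left inverse
    intro x hx
    have hmsx : ms i x = b := (mem_filter.mp (Finset.mem_coe.mp hx)).2
    funext r
    by_cases hr : r ∈ R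
    · simp only [if_pos hr]
      have h2 : ∀ r' ∈ (F (i r)).erase r,
          (if r' ∈ R then (0 : ZMod p) else x r') = x r' := by
        intro r' hr'
        have hr'F : r' ∈ F (i r) := mem_of_mem_erase hr'
        have hr'ne : r' ≠ r := ne_of_mem_erase hr'
        have hr'R : r' ∉ R := fun h => hr'ne (huniq r' r h hr ((hmemF (i r) r').mp hr'F))
        rw [if_neg hr'R]
      rw [Finset.sum_congr rfl h2]
      have hrF : r ∈ F (i r) := (hmemF (i r) r).mpr rfl
      have hsum : ∑ r' ∈ F (i r), x r' = b (i r) := congrFun hmsx (i r)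
      rw [Finset.sum_erase_eq_sub hrF, hsum]
      ring
    · simp [hr]
  · -- right inverse
    intro y hy
    rw [hY, Finset.mem_coe, Fintype.mem_piFinset] at hy
    funext r
    by_cases hr : r ∈ R
    · have := hy r
      rw [if_pos hr, Finset.mem_singleton] at this
      simp [hr, this]
    · simp [hr]

end aux

section aux2
variable {n t p : ℕ} [NeZero p]

lemma phi_ne_zero_iff (S : Finset (Fin n)) (b : Fin n → ZMod p) :
    phi n t p S b ≠ 0 ↔
      (Finset.univ.filter fun ix : (Fin t → Fin n) × (Fin t → ZMod p) =>
        (∀ r, ix.1 r ∈ S) ∧ ms ix.1 ix.2 = b).Nonempty := by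
  constructor
  · intro h
    rw [Finset.filter_nonempty_iff]
    by_contra hc
    push_neg at hc
    apply h
    ext ix
    have : ¬ ((∀ r, ix.1 r ∈ S) ∧ ms ix.1 ix.2 = b) := by
      intro hh; exact (hc ix (Finset.mem_univ ix) hh.1) hh.2
    simp only [phi, PiLp.toLp_apply, if_neg this]
    rfl
  · rintro ⟨ix, hix⟩ h
    rw [Finset.mem_filter] at hix
    have : phi n t p S b ix = 1 := by simp [phi, hix.2]
    rw [h] at this
    simp at this

lemma inner_phi {T S : Finset (Fin n)} (b : Fin n → ZMod p) (h : T ⊆ S) :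
    ⟪phi n t p T b, phi n t p S b⟫ =
      ((Finset.univ.filter fun ix : (Fin t → Fin n) × (Fin t → ZMod p) =>
        (∀ r, ix.1 r ∈ T) ∧ ms ix.1 ix.2 = b).card : ℝ) := by
  rw [PiLp.inner_apply]
  rw [← Finset.sum_boole]
  apply Finset.sum_congr rfl
  intro ix _
  simp only [phi, PiLp.toLp_apply, RCLike.inner_apply, conj_trivial]
  by_cases hc : (∀ r, ix.1 r ∈ T) ∧ ms ix.1 ix.2 = b
  · have hc2 : (∀ r, ix.1 r ∈ S) ∧ ms ix.1 ix.2 = b := ⟨fun r => h (hc.1 r), hc.2⟩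
    rw [if_pos hc, if_pos hc2]
    norm_num
  · rw [if_neg hc]
    norm_num

lemma norm_phi_sq (S : Finset (Fin n)) (b : Fin n → ZMod p) :
    ‖phi n t p S b‖ ^ 2 =
      ((Finset.univ.filter fun ix : (Fin t → Fin n) × (Fin t → ZMod p) =>
        (∀ r, ix.1 r ∈ S) ∧ ms ix.1 ix.2 = b).card : ℝ) := by
  rw [← real_inner_self_eq_norm_sq]
  exact inner_phi b (subset_refl S)

lemma card_filter_split (C : (Fin t → Fin n) → Prop) [DecidablePred C] (b : Fin n → ZMod p) :
    (Finset.univ.filter fun ix : (Fin t → Fin n) × (Fin t → ZMod p) =>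
        C ix.1 ∧ ms ix.1 ix.2 = b).card
      = ∑ i ∈ Finset.univ.filter C,
          (Finset.univ.filter fun x : Fin t → ZMod p => ms i x = b).card := by
  classical
  rw [Finset.card_filter, Fintype.sum_prod_type, Finset.sum_filter]
  apply Finset.sum_congr rfl
  intro i _
  by_cases hC : C i
  · rw [if_pos hC, Finset.card_filter]
    apply Finset.sum_congr rfl
    intro x _
    simp [hC]
  · simp [hC]

end aux2

/-- If `φ_{S,𝐛} ≠ 0` then `φ_𝐛 ≠ 0`, the squared normalized overlap of `φ_𝐛`
(the indicator for `supp 𝐛`) with `φ_{S,𝐛}` is at least `p/(p + k^t)`, and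
consequently `1 −` that overlap is at most `k^t/p`. -/
theorem overlap_phi_bound (n t p : ℕ) [NeZero p]
    (S : Finset (Fin n)) (k : ℕ) (hk : S.card = k)
    (b : Fin n → ZMod p) (hb : (msupp b).Nonempty) (hbS : msupp b ⊆ S)
    (hphi : phi n t p S b ≠ 0) :
    phi n t p (msupp b) b ≠ 0 ∧
    (p : ℝ) / (p + (k : ℝ) ^ t) ≤
      ⟪phi n t p (msupp b) b, phi n t p S b⟫ ^ 2 /
        (‖phi n t p (msupp b) b‖ ^ 2 * ‖phi n t p S b‖ ^ 2) ∧
    1 - ⟪phi n t p (msupp b) b, phi n t p S b⟫ ^ 2 /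
        (‖phi n t p (msupp b) b‖ ^ 2 * ‖phi n t p S b‖ ^ 2) ≤ (k : ℝ) ^ t / p := by
  have hp : 0 < p := Nat.pos_of_ne_zero (NeZero.ne p)
  set s := (msupp b).card with hs
  set fib : (Fin t → Fin n) → ℕ :=
    fun i => (Finset.univ.filter fun x : Fin t → ZMod p => ms i x = b).card with hfib
  set A := (Finset.univ.filter fun ix : (Fin t → Fin n) × (Fin t → ZMod p) =>
      (∀ r, ix.1 r ∈ msupp b) ∧ ms ix.1 ix.2 = b) with hA
  set B := (Finset.univ.filter fun ix : (Fin t → Fin n) × (Fin t → ZMod p) =>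
      (∀ r, ix.1 r ∈ S) ∧ ms ix.1 ix.2 = b) with hB
  have hBne : B.Nonempty := by rw [hB]; exact (phi_ne_zero_iff S b).mp hphi
  obtain ⟨ix1, hmem1⟩ := hBne
  have hBpos : 0 < B.card := Finset.card_pos.mpr ⟨ix1, hmem1⟩
  rw [hB, Finset.mem_filter] at hmem1
  obtain ⟨-, hCS1, hms1⟩ := hmem1
  have hsub1 : msupp b ⊆ Finset.image ix1.1 Finset.univ := msupp_subset_range hms1
  obtain ⟨q0, hq0⟩ := hb
  have ht : 0 < t := by
    obtain ⟨r, -, -⟩ := Finset.mem_image.mp (hsub1 hq0)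
    exact r.pos
  set i0 : Fin t → Fin n := fun r => if ix1.1 r ∈ msupp b then ix1.1 r else q0 with hi0
  have hi0mem : ∀ r, i0 r ∈ msupp b := by
    intro r
    simp only [hi0]
    split
    · assumption
    · exact hq0
  have hrng0 : Finset.image i0 Finset.univ = msupp b := by
    apply Finset.Subset.antisymm
    · intro q hq
      obtain ⟨r, -, hr⟩ := Finset.mem_image.mp hq
      rw [← hr]; exact hi0mem r
    · intro q hq
      obtain ⟨r, -, hr⟩ := Finset.mem_image.mp (hsub1 hq)
      exact Finset.mem_image.mpr ⟨r, Finset.mem_univ r, by simp [hi0, hr, hq]⟩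
  have hfib0 : fib i0 = p ^ (t - s) := by
    simp only [hfib]
    rw [fiber_card ht i0 b (by rw [hrng0]), hrng0]
  have hAsum : A.card = ∑ i ∈ Finset.univ.filter (fun i : Fin t → Fin n => ∀ r, i r ∈ msupp b),
      fib i := by
    simp only [hA, hfib]
    exact card_filter_split (fun i : Fin t → Fin n => ∀ r, i r ∈ msupp b) b
  have hAge : p ^ (t - s) ≤ A.card := by
    rw [hAsum, ← hfib0]
    exact Finset.single_le_sum (fun i _ => Nat.zero_le (fib i))
      (by simp only [Finset.mem_filter, Finset.mem_univ, true_and]; exact hi0mem)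
  have hApos : 0 < A.card := lt_of_lt_of_le (Nat.pow_pos hp) hAge
  -- split B
  set Tail := Finset.univ.filter
      (fun i : Fin t → Fin n => (∀ r, i r ∈ S) ∧ ¬ (∀ r, i r ∈ msupp b)) with hTailDef
  have hBsum : B.card = A.card +
      ∑ i ∈ Tail, fib i := by
    simp only [hB, hA, hTailDef, hfib]
    rw [card_filter_split (fun i : Fin t → Fin n => ∀ r, i r ∈ S) b,
      card_filter_split (fun i : Fin t → Fin n => ∀ r, i r ∈ msupp b) b]
    rw [← Finset.sum_filter_add_sum_filter_not
      (Finset.univ.filter (fun i : Fin t → Fin n => ∀ r, i r ∈ S))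
      (fun i => ∀ r, i r ∈ msupp b)
      (fun i => (Finset.univ.filter fun x : Fin t → ZMod p => ms i x = b).card)]
    congr 1
    · apply Finset.sum_congr _ (fun _ _ => rfl)
      ext i
      simp only [Finset.mem_filter, Finset.mem_univ, true_and]
      exact ⟨fun h => h.2, fun h => ⟨fun r => hbS (h r), h⟩⟩
    · apply Finset.sum_congr _ (fun _ _ => rfl)
      rw [Finset.filter_filter]
  have hTailcard : Tail.card ≤ k ^ t := by
    calc Tail.card
        ≤ (Fintype.piFinset fun _ : Fin t => S).card := by
          rw [hTailDef]
          apply Finset.card_le_card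
          intro i hi
          rw [Finset.mem_filter] at hi
          exact Fintype.mem_piFinset.mpr hi.2.1
      _ = k ^ t := by rw [Fintype.card_piFinset_const, hk]
  have key : p * B.card ≤ (p + k ^ t) * A.card := by
    rcases Nat.eq_zero_or_pos (∑ i ∈ Tail, fib i) with h0 | hposT
    · rw [hBsum, h0, Nat.add_zero]
      exact Nat.mul_le_mul_right _ (Nat.le_add_right _ _)
    · obtain ⟨iT, hiT, hfT⟩ := Finset.exists_ne_zero_of_sum_ne_zero hposT.ne'
      -- generic step for tail elements
      have hstep : ∀ i ∈ Tail,
          fib i ≠ 0 → s + 1 ≤ (Finset.image i Finset.univ).card ∧ fib i ≤ p ^ (t - (s + 1)) := by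
        intro i hi hne
        rw [hTailDef, Finset.mem_filter] at hi
        obtain ⟨-, -, hnotall⟩ := hi
        push_neg at hnotall
        obtain ⟨r0, hr0⟩ := hnotall
        have hfne : (Finset.univ.filter fun x : Fin t → ZMod p => ms i x = b).Nonempty := by
          rw [← Finset.card_pos]
          exact Nat.pos_of_ne_zero hne
        obtain ⟨x, hx⟩ := hfne
        rw [Finset.mem_filter] at hx
        have hsubi : msupp b ⊆ Finset.image i Finset.univ := msupp_subset_range hx.2
        have hss : msupp b ⊂ Finset.image i Finset.univ := by
          refine ⟨hsubi, fun hback => hr0 (hback (Finset.mem_image_of_mem i (Finset.mem_univ r0)))⟩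
        have hcard : s + 1 ≤ (Finset.image i Finset.univ).card :=
          Nat.succ_le_of_lt (Finset.card_lt_card hss)
        refine ⟨hcard, ?_⟩
        simp only [hfib]
        rw [fiber_card ht i b hsubi]
        exact Nat.pow_le_pow_right hp (Nat.sub_le_sub_left hcard t)
      have hts : s + 1 ≤ t := by
        have h1 := (hstep iT hiT hfT).1
        have h2 : (Finset.image iT Finset.univ).card ≤ t := by
          calc (Finset.image iT Finset.univ).card ≤ (Finset.univ : Finset (Fin t)).card :=
            Finset.card_image_le
          _ = t := by simp
        exact h1.trans h2
      have htail_le : ∑ i ∈ Tail, fib i ≤ k ^ t * p ^ (t - (s + 1)) := by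
        calc ∑ i ∈ Tail, fib i
            ≤ ∑ _i ∈ Tail, p ^ (t - (s + 1)) := by
              apply Finset.sum_le_sum
              intro i hi
              rcases Nat.eq_zero_or_pos (fib i) with h0' | hpos'
              · rw [h0']; exact Nat.zero_le _
              · exact (hstep i hi hpos'.ne').2
          _ = Tail.card * p ^ (t - (s + 1)) := by rw [Finset.sum_const, smul_eq_mul]
          _ ≤ k ^ t * p ^ (t - (s + 1)) := Nat.mul_le_mul_right _ hTailcard
      have hpow : p * p ^ (t - (s + 1)) = p ^ (t - s) := by
        rw [← pow_succ']
        congr 1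
        rw [← Nat.sub_sub]
        exact Nat.succ_pred_eq_of_pos (tsub_pos_of_lt (Nat.lt_of_succ_le hts))
      calc p * B.card = p * A.card + p * ∑ i ∈ Tail, fib i := by
            rw [hBsum]; ring
        _ ≤ p * A.card + p * (k ^ t * p ^ (t - (s + 1))) :=
            Nat.add_le_add_left (Nat.mul_le_mul_left _ htail_le) _
        _ = p * A.card + k ^ t * p ^ (t - s) := by rw [← hpow]; ring
        _ ≤ p * A.card + k ^ t * A.card :=
            Nat.add_le_add_left (Nat.mul_le_mul_left _ hAge) _
        _ = (p + k ^ t) * A.card := by ring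
  -- real part
  have hInner : ⟪phi n t p (msupp b) b, phi n t p S b⟫ = (A.card : ℝ) := by
    rw [hA]; exact inner_phi b hbS
  have hNA : ‖phi n t p (msupp b) b‖ ^ 2 = (A.card : ℝ) := by
    rw [hA]; exact norm_phi_sq _ b
  have hNB : ‖phi n t p S b‖ ^ 2 = (B.card : ℝ) := by
    rw [hB]; exact norm_phi_sq _ b
  have haR : (0 : ℝ) < (A.card : ℝ) := by exact_mod_cast hApos
  have hbR : (0 : ℝ) < (B.card : ℝ) := by exact_mod_cast hBpos
  have hratio : ⟪phi n t p (msupp b) b, phi n t p S b⟫ ^ 2 /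
      (‖phi n t p (msupp b) b‖ ^ 2 * ‖phi n t p S b‖ ^ 2) = (A.card : ℝ) / (B.card : ℝ) := by
    rw [hInner, hNA, hNB, sq, mul_div_mul_left _ _ (ne_of_gt haR)]
  have hkey : (p : ℝ) * (B.card : ℝ) ≤ ((p : ℝ) + (k : ℝ) ^ t) * (A.card : ℝ) := by
    exact_mod_cast key
  have hPpos : (0 : ℝ) < (p : ℝ) := by exact_mod_cast hp
  have hPK : (0 : ℝ) < (p : ℝ) + (k : ℝ) ^ t := by positivity
  have hgoal1 : (p : ℝ) / ((p : ℝ) + (k : ℝ) ^ t) ≤ (A.card : ℝ) / (B.card : ℝ) := by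
    rw [div_le_div_iff₀ hPK hbR]
    nlinarith [hkey]
  refine ⟨?_, ?_, ?_⟩
  · rw [phi_ne_zero_iff]
    rw [← hA]
    exact Finset.card_pos.mp hApos
  · rw [hratio]; exact hgoal1
  · rw [hratio]
    have h3 : 1 - (p : ℝ) / ((p : ℝ) + (k : ℝ) ^ t) = (k : ℝ) ^ t / ((p : ℝ) + (k : ℝ) ^ t) := by
      field_simp
      ring
    have h4 : (k : ℝ) ^ t / ((p : ℝ) + (k : ℝ) ^ t) ≤ (k : ℝ) ^ t / (p : ℝ) := by
      have hKnn : (0 : ℝ) ≤ (k : ℝ) ^ t := by positivity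
      apply div_le_div_of_nonneg_left hKnn hPpos (by linarith)
    linarith
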